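/- arXiv:2501.17523 — 3 statements merged into one kernel-verified Lean document; each statement's English description precedes it below -/
import Mathlib

section
/- For every λ > 0 and every irrational α, the set σ^H(c,v) \ [−λ, λ] is nonempty. -/
open MeasureTheory Filter Real

noncomputable section

/-- Distance from a real number to the nearest integer, `‖x‖_𝕋`. -/
def distT (x : ℝ) : ℝ := |x - round x|

/-- `α ∈ DC(γ,σ)`. -/
def DiophantineCond (γ σ α : ℝ) : Prop :=
  ∀ k : ℤ, k ≠ 0 → γ / |(k : ℝ)| ^ σ ≤ distT (k * α)

/-- `α ∈ DC = ⋃_{γ,σ>0} DC(γ,σ)`. -/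
def Diophantine (α : ℝ) : Prop :=
  ∃ γ σ : ℝ, 0 < γ ∧ 0 < σ ∧ DiophantineCond γ σ α

/-- The mosaic-type potential `v(θ,n)`. -/
def mosV (α lam θ : ℝ) (n : ℤ) : ℝ :=
  if Odd n then Real.cos (2 * π * (((n : ℝ) - 1) * α + θ))
  else Real.cos (2 * π * ((n : ℝ) * α + θ))

/-- The mosaic-type hopping `c(θ,n)`. -/
def mosC (α lam θ : ℝ) (n : ℤ) : ℝ :=
  if Odd n then lam else Real.cos (2 * π * ((n : ℝ) * α + θ))

/-- `θ ∈ 𝕋₀`. -/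
def memT0 (α θ : ℝ) : Prop := ∀ n : ℤ, Real.cos (2 * π * ((n : ℝ) * α + θ)) ≠ 0

/-- The Hilbert space `ℓ²(ℤ,ℂ)`. -/
abbrev ZSeq := lp (fun _ : ℤ => ℂ) 2

/-- `H` acts as the mosaic-type Jacobi operator `H_{c,v,θ}` on `ℓ²(ℤ)`. -/
def IsMosaicOp (α lam θ : ℝ) (H : ZSeq →L[ℂ] ZSeq) : Prop :=
  ∀ u : ZSeq, ∀ n : ℤ,
    (H u : ∀ _ : ℤ, ℂ) n =
      (mosC α lam θ n : ℂ) * (u : ∀ _ : ℤ, ℂ) (n + 1)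
      + (mosC α lam θ (n - 1) : ℂ) * (u : ∀ _ : ℤ, ℂ) (n - 1)
      + (mosV α lam θ n : ℂ) * (u : ∀ _ : ℤ, ℂ) n

/-- The spectrum of `H`, viewed as a subset of `ℝ`. -/
def realSpectrum (H : ZSeq →L[ℂ] ZSeq) : Set ℝ := {E : ℝ | (E : ℂ) ∈ spectrum ℂ H}

/-- `μ` is the spectral measure of the bounded self-adjoint operator `H` at the vector `φ`:
it is compactly supported and has the correct moments. -/
def IsSpectralMeasure (H : ZSeq →L[ℂ] ZSeq) (φ : ZSeq) (μ : Measure ℝ) : Prop :=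
  (∃ R : ℝ, μ {x : ℝ | R < |x|} = 0) ∧
  ∀ k : ℕ, (∫ x : ℝ, (x : ℂ) ^ k ∂μ) = @inner ℂ _ _ φ ((H ^ k) φ)

/-- The restriction of `μ` to `B` is singular continuous: it is mutually singular with
Lebesgue measure and has no atoms. -/
def SingContOn (μ : Measure ℝ) (B : Set ℝ) : Prop :=
  (μ.restrict B).MutuallySingular volume ∧ ∀ x : ℝ, μ.restrict B {x} = 0

/-- The restriction of `μ` to `B` is absolutely continuous w.r.t. Lebesgue measure. -/
def AbsContOn (μ : Measure ℝ) (B : Set ℝ) : Prop := μ.restrict B ≪ volume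

/-- The restriction of `μ` to `B` is pure point (supported on a countable set). -/
def PurePointOn (μ : Measure ℝ) (B : Set ℝ) : Prop :=
  ∃ D : Set ℝ, D.Countable ∧ μ.restrict B Dᶜ = 0

/-- `u : ℤ → ℂ` is a formal solution of `H_{c,v,θ} u = E u`. -/
def MosaicEigenEq (α lam θ E : ℝ) (u : ℤ → ℂ) : Prop :=
  ∀ n : ℤ,
    (mosC α lam θ n : ℂ) * u (n + 1) + (mosC α lam θ (n - 1) : ℂ) * u (n - 1)
      + (mosV α lam θ n : ℂ) * u n = (E : ℂ) * u n

/-- Anderson localization of the mosaic operator in the set `S`: pure point spectrum in `S`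
together with exponential decay of the eigenfunctions with eigenvalue in `S`. -/
def AndersonLocalizationIn (α lam θ : ℝ) (H : ZSeq →L[ℂ] ZSeq) (S : Set ℝ) : Prop :=
  (∀ φ : ZSeq, ∀ μ : Measure ℝ, IsSpectralMeasure H φ μ → PurePointOn μ S) ∧
  (∀ E ∈ S, ∀ u : ℤ → ℂ, Memℓp u 2 → u ≠ 0 → MosaicEigenEq α lam θ E u →
    ∃ C γ : ℝ, 0 < γ ∧ ∀ n : ℤ, ‖u n‖ ≤ C * Real.exp (-γ * |(n : ℝ)|))



lemma sqsum (u : ZSeq) (k : ℤ) : Summable fun n : ℤ => ‖(u : ∀ _ : ℤ, ℂ) (n + k)‖ ^ 2 := by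
  have h0 := (lp.memℓp u).summable (p := 2) (by norm_num)
  have h2 : (2:ENNReal).toReal = ((2:ℕ):ℝ) := by norm_num
  rw [h2] at h0
  have h1 : Summable fun n : ℤ => ‖(u : ∀ _ : ℤ, ℂ) n‖ ^ 2 :=
    h0.congr fun n => by rw [Real.rpow_natCast]
  exact (((Equiv.addRight k).summable_iff
    (f := fun n : ℤ => ‖(u : ∀ _ : ℤ, ℂ) n‖ ^ 2)).2 h1).congr fun n => rfl

lemma key_summable (u v : ZSeq) (w : ℤ → ℝ) (M : ℝ) (hw : ∀ n, |w n| ≤ M) (k j : ℤ) :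
    Summable fun n : ℤ => (w n : ℂ) * (starRingEnd ℂ) ((u : ∀ _ : ℤ, ℂ) (n + k))
      * (v : ∀ _ : ℤ, ℂ) (n + j) := by
  have hM : 0 ≤ M := le_trans (abs_nonneg _) (hw 0)
  refine Summable.of_norm_bounded
    (g := fun n => M * (‖(u : ∀ _ : ℤ, ℂ) (n + k)‖ ^ 2 + ‖(v : ∀ _ : ℤ, ℂ) (n + j)‖ ^ 2))
    (((sqsum u k).add (sqsum v j)).mul_left M) fun n => ?_
  have h1 : ‖(w n : ℂ) * (starRingEnd ℂ) ((u : ∀ _ : ℤ, ℂ) (n + k)) * (v : ∀ _ : ℤ, ℂ) (n + j)‖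
      = |w n| * (‖(u : ∀ _ : ℤ, ℂ) (n + k)‖ * ‖(v : ∀ _ : ℤ, ℂ) (n + j)‖) := by
    simp [norm_mul, Complex.norm_real, Real.norm_eq_abs, mul_assoc]
  rw [h1]
  beta_reduce
  have ha := norm_nonneg ((u : ∀ _ : ℤ, ℂ) (n + k))
  have hb := norm_nonneg ((v : ∀ _ : ℤ, ℂ) (n + j))
  nlinarith [hw n, abs_nonneg (w n), sq_nonneg (‖(u : ∀ _ : ℤ, ℂ) (n + k)‖ - ‖(v : ∀ _ : ℤ, ℂ) (n + j)‖)]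

lemma mosC_bound {α lam θ : ℝ} (hlam : 0 < lam) (n : ℤ) : |mosC α lam θ n| ≤ max lam 1 := by
  unfold mosC; split
  · rw [abs_of_pos hlam]; exact le_max_left _ _
  · exact (Real.abs_cos_le_one _).trans (le_max_right _ _)

lemma mosV_bound (α lam θ : ℝ) (n : ℤ) : |mosV α lam θ n| ≤ max lam 1 := by
  unfold mosV; split <;> exact (Real.abs_cos_le_one _).trans (le_max_right _ _)

lemma mosaic_selfAdjoint {α lam θ : ℝ} (hlam : 0 < lam) {H : ZSeq →L[ℂ] ZSeq}
    (hH : IsMosaicOp α lam θ H) : IsSelfAdjoint H := by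
  rw [ContinuousLinearMap.isSelfAdjoint_iff_isSymmetric]
  intro u v
  show (inner ℂ (H u) v : ℂ) = inner ℂ u (H v)
  set C := mosC α lam θ with hCdef
  set V := mosV α lam θ with hVdef
  set M := max lam 1 with hM
  have hC : ∀ n, |C n| ≤ M := fun n => mosC_bound hlam n
  have hV : ∀ n, |V n| ≤ M := fun n => mosV_bound α lam θ n
  have hC' : ∀ n : ℤ, |C (n - 1)| ≤ M := fun n => hC (n - 1)
  have S1 : Summable fun n : ℤ => (C n : ℂ) * (starRingEnd ℂ) ((u : ∀ _ : ℤ, ℂ) (n + 1)) * (v : ∀ _ : ℤ, ℂ) n := by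
    simpa using key_summable u v C M hC 1 0
  have S2 : Summable fun n : ℤ => (C (n - 1) : ℂ) * (starRingEnd ℂ) ((u : ∀ _ : ℤ, ℂ) (n - 1)) * (v : ∀ _ : ℤ, ℂ) n := by
    have := key_summable u v (fun n => C (n - 1)) M hC' (-1) 0
    simpa [sub_eq_add_neg] using this
  have S3 : Summable fun n : ℤ => (V n : ℂ) * (starRingEnd ℂ) ((u : ∀ _ : ℤ, ℂ) n) * (v : ∀ _ : ℤ, ℂ) n := by
    simpa using key_summable u v V M hV 0 0
  have T1 : Summable fun n : ℤ => (C n : ℂ) * (starRingEnd ℂ) ((u : ∀ _ : ℤ, ℂ) n) * (v : ∀ _ : ℤ, ℂ) (n + 1) := by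
    simpa using key_summable u v C M hC 0 1
  have T2 : Summable fun n : ℤ => (C (n - 1) : ℂ) * (starRingEnd ℂ) ((u : ∀ _ : ℤ, ℂ) n) * (v : ∀ _ : ℤ, ℂ) (n - 1) := by
    have := key_summable u v (fun n => C (n - 1)) M hC' 0 (-1)
    simpa [sub_eq_add_neg] using this
  have hL : (inner ℂ (H u) v : ℂ) =
      (∑' n : ℤ, (C n : ℂ) * (starRingEnd ℂ) ((u : ∀ _ : ℤ, ℂ) (n + 1)) * (v : ∀ _ : ℤ, ℂ) n)
      + (∑' n : ℤ, (C (n - 1) : ℂ) * (starRingEnd ℂ) ((u : ∀ _ : ℤ, ℂ) (n - 1)) * (v : ∀ _ : ℤ, ℂ) n)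
      + (∑' n : ℤ, (V n : ℂ) * (starRingEnd ℂ) ((u : ∀ _ : ℤ, ℂ) n) * (v : ∀ _ : ℤ, ℂ) n) := by
    rw [← (lp.hasSum_inner (𝕜 := ℂ) (H u) v).tsum_eq, ← Summable.tsum_add S1 S2,
      ← Summable.tsum_add (S1.add S2) S3]
    refine tsum_congr fun n => ?_
    rw [RCLike.inner_apply', hH u n]
    push_cast
    simp only [map_add, map_mul, Complex.conj_ofReal]
    ring
  have hR : (inner ℂ u (H v) : ℂ) =
      (∑' n : ℤ, (C n : ℂ) * (starRingEnd ℂ) ((u : ∀ _ : ℤ, ℂ) n) * (v : ∀ _ : ℤ, ℂ) (n + 1))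
      + (∑' n : ℤ, (C (n - 1) : ℂ) * (starRingEnd ℂ) ((u : ∀ _ : ℤ, ℂ) n) * (v : ∀ _ : ℤ, ℂ) (n - 1))
      + (∑' n : ℤ, (V n : ℂ) * (starRingEnd ℂ) ((u : ∀ _ : ℤ, ℂ) n) * (v : ∀ _ : ℤ, ℂ) n) := by
    rw [← (lp.hasSum_inner (𝕜 := ℂ) u (H v)).tsum_eq, ← Summable.tsum_add T1 T2,
      ← Summable.tsum_add (T1.add T2) S3]
    refine tsum_congr fun n => ?_
    rw [RCLike.inner_apply', hH v n]
    ring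
  have e1 : (∑' n : ℤ, (C n : ℂ) * (starRingEnd ℂ) ((u : ∀ _ : ℤ, ℂ) (n + 1)) * (v : ∀ _ : ℤ, ℂ) n)
      = ∑' n : ℤ, (C (n - 1) : ℂ) * (starRingEnd ℂ) ((u : ∀ _ : ℤ, ℂ) n) * (v : ∀ _ : ℤ, ℂ) (n - 1) := by
    rw [← (Equiv.addRight (1 : ℤ)).tsum_eq
      (f := fun n : ℤ => (C (n - 1) : ℂ) * (starRingEnd ℂ) ((u : ∀ _ : ℤ, ℂ) n) * (v : ∀ _ : ℤ, ℂ) (n - 1))]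
    exact tsum_congr fun n => by simp [Equiv.coe_addRight, add_sub_cancel_right]
  have e2 : (∑' n : ℤ, (C (n - 1) : ℂ) * (starRingEnd ℂ) ((u : ∀ _ : ℤ, ℂ) (n - 1)) * (v : ∀ _ : ℤ, ℂ) n)
      = ∑' n : ℤ, (C n : ℂ) * (starRingEnd ℂ) ((u : ∀ _ : ℤ, ℂ) n) * (v : ∀ _ : ℤ, ℂ) (n + 1) := by
    rw [← (Equiv.addRight (1 : ℤ)).tsum_eq
      (f := fun n : ℤ => (C (n - 1) : ℂ) * (starRingEnd ℂ) ((u : ∀ _ : ℤ, ℂ) (n - 1)) * (v : ∀ _ : ℤ, ℂ) n)]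
    exact tsum_congr fun n => by simp [Equiv.coe_addRight, add_sub_cancel_right]
  rw [hL, hR, e1, e2]
  ring

lemma not_rat_quarter {α : ℝ} (hα : Irrational α) (k : ℤ) : α ≠ (k : ℝ) / 4 := by
  intro h
  have : Irrational ((k : ℝ) / 4) := h ▸ hα
  rw [show ((k : ℝ) / 4) = ((k / 4 : ℚ) : ℝ) by push_cast; ring] at this
  exact this.ne_rat _ rfl

lemma cos_twopi_ne {α : ℝ} (hα : Irrational α) : Real.cos (2 * π * α) ≠ 0 := by
  intro h
  obtain ⟨k, hk⟩ := Real.cos_eq_zero_iff.1 h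
  have hπ := Real.pi_ne_zero
  apply not_rat_quarter hα (2 * k + 1)
  have : 2 * π * α = (2 * k + 1) * π / 2 := hk
  field_simp
  push_cast
  refine mul_right_cancel₀ hπ ?_
  linarith [this]

lemma exists_good_n {α θ : ℝ} (hα : Irrational α) :
    ∃ n : ℤ, Odd n ∧ Real.cos (2 * π * ((n : ℝ) * α + θ)) ≠ 0 := by
  by_contra h
  push_neg at h
  have h1 := h 1 ⟨0, by ring⟩
  have h3 := h 3 ⟨1, by ring⟩
  obtain ⟨k, hk⟩ := Real.cos_eq_zero_iff.1 h1
  obtain ⟨m, hm⟩ := Real.cos_eq_zero_iff.1 h3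
  have hπ := Real.pi_ne_zero
  apply not_rat_quarter hα (m - k)
  push_cast at hk hm ⊢
  have h4 : (4 * α) * π = ((m : ℝ) - k) * π := by linarith [hk, hm]
  have h5 := mul_right_cancel₀ hπ h4
  field_simp
  linarith [h5]

lemma mosaic_norm_lt {α lam θ : ℝ} (hα : Irrational α) (hlam : 0 < lam)
    {H : ZSeq →L[ℂ] ZSeq} (hH : IsMosaicOp α lam θ H) : lam < ‖H‖ := by
  obtain ⟨n, hodd, hcosn⟩ := exists_good_n (θ := θ) hα
  have hcosα := cos_twopi_ne hα
  set s : ℝ := Real.cos (2 * π * ((n : ℝ) * α + θ)) * Real.cos (2 * π * α) with hsdef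
  have hs : s ≠ 0 := mul_ne_zero hcosn hcosα
  have hodd' : ¬ Odd (n + 1) := by
    rcases hodd with ⟨t, rfl⟩; rintro ⟨r, hr⟩; omega
  have hVsum : mosV α lam θ n + mosV α lam θ (n + 1) = 2 * s := by
    simp only [mosV, if_pos hodd, if_neg hodd']
    rw [Real.cos_add_cos]
    have h1 : (2 * π * (((n:ℝ) - 1) * α + θ) + 2 * π * (((n + 1 : ℤ):ℝ) * α + θ)) / 2
        = 2 * π * ((n:ℝ) * α + θ) := by push_cast; ring
    have h2 : (2 * π * (((n:ℝ) - 1) * α + θ) - 2 * π * (((n + 1 : ℤ):ℝ) * α + θ)) / 2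
        = -(2 * π * α) := by push_cast; ring
    rw [h1, h2, Real.cos_neg, hsdef]
    ring
  set ε : ℝ := if 0 < s then 1 else -1 with hεdef
  have hε1 : ε = 1 ∨ ε = -1 := by rw [hεdef]; split <;> simp
  have hε2 : ε ^ 2 = 1 := by rcases hε1 with h | h <;> rw [h] <;> norm_num
  set u0 : ZSeq := lp.single 2 n (1:ℂ) + lp.single 2 (n+1) (ε:ℂ) with hu0def
  have hcoord : ∀ m : ℤ, (u0 : ∀ _ : ℤ, ℂ) m
      = if m = n then 1 else if m = n + 1 then (ε:ℂ) else 0 := by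
    intro m
    have hadd : (u0 : ∀ _ : ℤ, ℂ) m
        = (lp.single 2 n (1:ℂ) : ∀ _ : ℤ, ℂ) m + (lp.single 2 (n+1) (ε:ℂ) : ∀ _ : ℤ, ℂ) m := by
      rw [hu0def, lp.coeFn_add]; rfl
    rw [hadd]
    by_cases h1 : m = n
    · rw [h1, lp.single_apply_self, lp.single_apply_ne 2 (n+1) _ (by omega : n ≠ n + 1)]
      simp
    · by_cases h2 : m = n + 1
      · rw [h2, lp.single_apply_ne 2 n _ (by omega : n + 1 ≠ n), lp.single_apply_self]
        simp [show (n + 1 : ℤ) ≠ n by omega]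
      · rw [lp.single_apply_ne 2 n _ h1, lp.single_apply_ne 2 (n+1) _ h2]
        simp [h1, h2]
  have hne : (n : ℤ) ≠ n + 1 := by omega
  have hsupp : ∀ m : ℤ, m ∉ ({n, n+1} : Finset ℤ) → (u0 : ∀ _ : ℤ, ℂ) m = 0 := by
    intro m hm
    simp only [Finset.mem_insert, Finset.mem_singleton, not_or] at hm
    rw [hcoord m, if_neg hm.1, if_neg hm.2]
  -- norm of u0
  have hinner_self : (inner ℂ u0 u0 : ℂ) = 2 := by
    rw [← (lp.hasSum_inner (𝕜 := ℂ) u0 u0).tsum_eq,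
      tsum_eq_sum (s := {n, n+1}) (fun m hm => by rw [RCLike.inner_apply', hsupp m hm]; simp),
      Finset.sum_pair hne]
    rw [RCLike.inner_apply', RCLike.inner_apply', hcoord n, hcoord (n+1),
      if_pos rfl, if_neg hne.symm ]
    simp only [if_pos rfl, map_one, one_mul, Complex.conj_ofReal]
    rcases hε1 with h | h <;> rw [h] <;> norm_num
  have hnorm2 : ‖u0‖ ^ 2 = 2 := by
    have := inner_self_eq_norm_sq_to_K (𝕜 := ℂ) u0
    rw [hinner_self] at this
    have h2 : ((2:ℝ):ℂ) = ((‖u0‖ ^ 2 : ℝ):ℂ) := by push_cast; exact this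
    exact (Complex.ofReal_inj.1 h2).symm
  -- quadratic form
  have hCn : mosC α lam θ n = lam := if_pos hodd
  have hq : (inner ℂ u0 (H u0) : ℂ) = ((2 * lam * ε + 2 * s : ℝ) : ℂ) := by
    rw [← (lp.hasSum_inner (𝕜 := ℂ) u0 (H u0)).tsum_eq,
      tsum_eq_sum (s := {n, n+1}) (fun m hm => by rw [RCLike.inner_apply', hsupp m hm]; simp),
      Finset.sum_pair hne]
    rw [RCLike.inner_apply', RCLike.inner_apply', hH u0 n, hH u0 (n+1)]
    rw [hcoord n, hcoord (n+1), hcoord (n-1), hcoord (n+1+1), hcoord (n+1-1)]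
    rw [if_pos rfl, if_neg hne.symm, if_pos rfl,
      if_neg (by omega : n - 1 ≠ n), if_neg (by omega : n - 1 ≠ n + 1),
      if_neg (by omega : n + 1 + 1 ≠ n), if_neg (by omega : n + 1 + 1 ≠ n + 1),
      if_pos (by omega : n + 1 - 1 = n)]
    rw [show n + 1 - 1 = n by omega, hCn]
    rw [show mosV α lam θ (n+1) = 2 * s - mosV α lam θ n by linarith [hVsum]]
    have hε2c : ((ε:ℂ)) ^ 2 = 1 := by exact_mod_cast congrArg (fun x : ℝ => (x:ℂ)) hε2
    simp only [map_one, Complex.conj_ofReal]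
    push_cast
    linear_combination (2 * (s:ℂ) - (mosV α lam θ n : ℂ)) * hε2c
  -- absolute value
  have habs : ‖(inner ℂ u0 (H u0) : ℂ)‖ = 2 * lam + 2 * |s| := by
    rw [hq, Complex.norm_real, Real.norm_eq_abs]
    rcases lt_or_gt_of_ne hs with hneg | hpos
    · have hε : ε = -1 := by rw [hεdef, if_neg (by linarith)]
      rw [hε, abs_of_neg (by nlinarith), abs_of_neg hneg]
      ring
    · have hε : ε = 1 := by rw [hεdef, if_pos hpos]
      rw [hε, abs_of_pos (by nlinarith), abs_of_pos hpos]
      ring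
  -- conclude
  have hCS : ‖(inner ℂ u0 (H u0) : ℂ)‖ ≤ ‖u0‖ * ‖H u0‖ := norm_inner_le_norm _ _
  have hop : ‖H u0‖ ≤ ‖H‖ * ‖u0‖ := H.le_opNorm u0
  have hu0norm : 0 ≤ ‖u0‖ := norm_nonneg _
  have hfin : 2 * lam + 2 * |s| ≤ ‖H‖ * 2 := by
    calc 2 * lam + 2 * |s| = ‖(inner ℂ u0 (H u0) : ℂ)‖ := habs.symm
      _ ≤ ‖u0‖ * ‖H u0‖ := hCS
      _ ≤ ‖u0‖ * (‖H‖ * ‖u0‖) := by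
          exact mul_le_mul_of_nonneg_left hop hu0norm
      _ = ‖H‖ * ‖u0‖ ^ 2 := by ring
      _ = ‖H‖ * 2 := by rw [hnorm2]
  have habs_pos : 0 < |s| := abs_pos.2 hs
  linarith


instance : Nontrivial (ZSeq →L[ℂ] ZSeq) := by
  have hu : (lp.single 2 (0:ℤ) (1:ℂ) : ZSeq) ≠ 0 := by
    intro h
    have h0 : (lp.single 2 (0:ℤ) (1:ℂ) : ∀ _ : ℤ, ℂ) 0 = ((0 : ZSeq) : ∀ _ : ℤ, ℂ) 0 := by
      rw [h]
    rw [lp.single_apply_self] at h0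
    simpa using h0
  refine ⟨1, 0, fun h => hu ?_⟩
  simpa using congrArg (fun T : ZSeq →L[ℂ] ZSeq => T (lp.single 2 (0:ℤ) (1:ℂ))) h

/-- For every `λ > 0` and every irrational `α`, the set
`σ^H(c,v) \ [−λ, λ]` is nonempty. -/
theorem mosaic_supercritical_nonempty (α lam θ : ℝ) (hα : Irrational α) (hlam : 0 < lam)
    (H : ZSeq →L[ℂ] ZSeq) (hH : IsMosaicOp α lam θ H) :
    (realSpectrum H \ Set.Icc (-lam) lam).Nonempty := by
  have hsa : IsSelfAdjoint H := mosaic_selfAdjoint hlam hH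
  have hlt : lam < ‖H‖ := mosaic_norm_lt hα hlam hH
  obtain ⟨z, hz, hzr⟩ := spectrum.exists_nnnorm_eq_spectralRadius (a := H)
  have hrad : spectralRadius ℂ H = ‖H‖₊ := hsa.spectralRadius_eq_nnnorm
  rw [hrad] at hzr
  have h' : ‖z‖₊ = ‖H‖₊ := by exact_mod_cast hzr
  have hzn : ‖z‖ = ‖H‖ := by
    have := congrArg (fun t : NNReal => (t : ℝ)) h'
    simpa using this
  have hzre : z = (z.re : ℂ) := hsa.mem_spectrum_eq_re hz
  have habs : |z.re| = ‖H‖ := by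
    rw [← hzn, hzre]
    rw [Complex.norm_real, Real.norm_eq_abs, Complex.ofReal_re]
  refine ⟨z.re, ?_, ?_⟩
  · show ((z.re : ℝ) : ℂ) ∈ spectrum ℂ H
    rw [← hzre]
    exact hz
  · intro hmem
    rw [Set.mem_Icc] at hmem
    have h1 : |z.re| ≤ lam := abs_le.2 ⟨hmem.1, hmem.2⟩
    rw [habs] at h1
    linarith
end
end

section
/- For every λ > 0, every irrational α, and every θ ∈ 𝕋₀, neither λ nor −λ is an eigenvalue of the mosaic-type operator H_{c,v,θ} (i.e., the equation H_{c,v,θ}u = ±λ u has no nonzero solution u ∈ ℓ²(ℤ)). -/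
open MeasureTheory Filter Real

noncomputable section

/-- For every `λ > 0`, every irrational `α`, and every `θ ∈ 𝕋₀`, neither
`λ` nor `−λ` is an eigenvalue of the mosaic-type operator `H_{c,v,θ}`: the equation
`H_{c,v,θ} u = ±λ u` has no nonzero solution `u ∈ ℓ²(ℤ)`. -/
theorem mosaic_pm_lambda_not_eigenvalue (α lam θ : ℝ) (hα : Irrational α) (hlam : 0 < lam)
    (hθ : memT0 α θ) (E : ℝ) (hE : E = lam ∨ E = -lam) :
    ∀ u : ℤ → ℂ, Memℓp u 2 → MosaicEigenEq α lam θ E u → u = 0 := by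
  intro u hu heig
  -- sign `s = E/λ`
  obtain ⟨s, hs2, hsE⟩ : ∃ s : ℂ, s * s = 1 ∧ (E : ℂ) = (lam : ℂ) * s := by
    rcases hE with h | h
    · exact ⟨1, by ring, by simp [h]⟩
    · exact ⟨-1, by ring, by push_cast [h]; ring⟩
  have hs1 : ‖s‖ = 1 := by
    have h : ‖s‖ * ‖s‖ = 1 := by rw [← norm_mul, hs2, norm_one]
    nlinarith [norm_nonneg s]
  have hlam0 : (lam : ℂ) ≠ 0 := by exact_mod_cast hlam.ne'
  -- members of ℓ² tend to zero along cofinite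
  have hsum : Summable fun n : ℤ => ‖u n‖ ^ (2 : ℝ) := by
    simpa using hu.summable (by norm_num)
  have hT : Filter.Tendsto (fun n : ℤ => ‖u n‖) Filter.cofinite (nhds 0) := by
    have h1 := hsum.tendsto_cofinite_zero
    have h3 := (Real.continuous_sqrt.tendsto 0).comp h1
    rw [Real.sqrt_zero] at h3
    have hfun : (fun n : ℤ => ‖u n‖)
        = fun n : ℤ => Real.sqrt (‖u n‖ ^ (2 : ℝ)) := by
      funext n
      rw [show ((2 : ℝ)) = ((2 : ℕ) : ℝ) by norm_num, Real.rpow_natCast,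
        Real.sqrt_sq (norm_nonneg _)]
    rw [hfun]
    exact h3
  have inj2 : Function.Injective (fun k : ℤ => 2 * k) := fun x y h => by
    simpa using h
  have inj2' : Function.Injective (fun k : ℤ => 2 * k - 1) := fun x y h => by
    simp only at h; omega
  have hT2 : Filter.Tendsto (fun k : ℤ => ‖u (2 * k)‖) Filter.cofinite (nhds 0) :=
    hT.comp inj2.tendsto_cofinite
  have hT2' : Filter.Tendsto (fun k : ℤ => ‖u (2 * k - 1)‖) Filter.cofinite (nhds 0) :=
    hT.comp inj2'.tendsto_cofinite
  -- generic: norm-preserved recurrences are constant in norm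
  have normConst : ∀ F : ℤ → ℂ, (∀ k : ℤ, ‖F (k + 1)‖ = ‖F k‖) →
      ∀ k : ℤ, ‖F k‖ = ‖F 0‖ := by
    intro F hF k
    induction k using Int.induction_on with
    | zero => rfl
    | succ n ih => rw [hF, ih]
    | pred n ih =>
      have h := hF (-(n : ℤ) - 1)
      rw [show (-(n : ℤ) - 1 + 1) = -n by ring] at h
      rw [← h, ih]
  set a : ℤ → ℂ := fun m => ((Real.cos (2 * π * ((m : ℝ) * α + θ)) : ℝ) : ℂ) with ha_def
  have ha : ∀ m : ℤ, a m ≠ 0 := fun m => Complex.ofReal_ne_zero.mpr (hθ m)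
  -- the eigenvalue equation at even and odd sites
  have hEv : ∀ k : ℤ, a (2 * k) * u (2 * k + 1) + (lam : ℂ) * u (2 * k - 1)
      + a (2 * k) * u (2 * k) = (E : ℂ) * u (2 * k) := by
    intro k
    have h := heig (2 * k)
    have h1 : ¬ Odd (2 * k) := by simp [Int.not_odd_iff_even]
    have h2 : Odd (2 * k - 1) := ⟨k - 1, by ring⟩
    simp only [mosC, mosV, if_neg h1, if_pos h2] at h
    simpa only [ha_def] using h
  have hOd : ∀ k : ℤ, (lam : ℂ) * u (2 * k + 2) + a (2 * k) * u (2 * k)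
      + a (2 * k) * u (2 * k + 1) = (E : ℂ) * u (2 * k + 1) := by
    intro k
    have h := heig (2 * k + 1)
    rw [show (2 * k + 1 - 1 : ℤ) = 2 * k by ring,
      show (2 * k + 1 + 1 : ℤ) = 2 * k + 2 by ring] at h
    have h1 : Odd (2 * k + 1) := ⟨k, by ring⟩
    have h2 : ¬ Odd (2 * k) := by simp [Int.not_odd_iff_even]
    have e2 : (((2 * k + 1 : ℤ) : ℝ) - 1) = ((2 * k : ℤ) : ℝ) := by push_cast; ring
    simp only [mosC, mosV, if_pos h1, if_neg h2, e2] at h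
    simpa only [ha_def] using h
  -- the key recurrence: u(2k) - s·u(2k-1) flips sign (times s)
  have hGrec : ∀ k : ℤ, u (2 * (k + 1)) - s * u (2 * (k + 1) - 1)
      = -s * (u (2 * k) - s * u (2 * k - 1)) := by
    intro k
    have hu2 : u (2 * k + 2) = s * u (2 * k + 1) - s * u (2 * k) + u (2 * k - 1) := by
      apply mul_left_cancel₀ hlam0
      have h := hOd k
      have h' := hEv k
      rw [hsE] at h h'
      linear_combination h - h'
    rw [show (2 * (k + 1) - 1 : ℤ) = 2 * k + 1 by ring,
      show (2 * (k + 1) : ℤ) = 2 * k + 2 by ring, hu2]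
    linear_combination (- u (2 * k - 1)) * hs2
  have hGn : ∀ k : ℤ, ‖u (2 * k) - s * u (2 * k - 1)‖
      = ‖u (2 * 0) - s * u (2 * 0 - 1)‖ :=
    normConst (fun k => u (2 * k) - s * u (2 * k - 1))
      (fun k => by
        show ‖u (2 * (k + 1)) - s * u (2 * (k + 1) - 1)‖
          = ‖u (2 * k) - s * u (2 * k - 1)‖
        rw [hGrec k, norm_mul, norm_neg, hs1, one_mul])
  -- the constant is zero
  have hzero : ∀ c : ℝ, (∀ k : ℤ, c ≤ ‖u (2 * k)‖ + ‖u (2 * k - 1)‖) → c ≤ 0 := by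
    intro c hc
    have hb : Filter.Tendsto (fun k : ℤ => ‖u (2 * k)‖ + ‖u (2 * k - 1)‖)
        Filter.cofinite (nhds 0) := by simpa using hT2.add hT2'
    exact ge_of_tendsto' hb hc
  have hGall : ∀ k : ℤ, u (2 * k) - s * u (2 * k - 1) = 0 := by
    have hc : ‖u (2 * (0 : ℤ)) - s * u (2 * 0 - 1)‖ ≤ 0 := by
      apply hzero
      intro k
      rw [← hGn k]
      calc ‖u (2 * k) - s * u (2 * k - 1)‖
          ≤ ‖u (2 * k)‖ + ‖s * u (2 * k - 1)‖ := norm_sub_le _ _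
        _ = ‖u (2 * k)‖ + ‖u (2 * k - 1)‖ := by rw [norm_mul, hs1, one_mul]
    have hc0 : u (2 * (0 : ℤ)) - s * u (2 * 0 - 1) = 0 :=
      norm_eq_zero.mp (le_antisymm hc (norm_nonneg _))
    intro k
    exact norm_eq_zero.mp (by rw [hGn k, hc0, norm_zero])
  -- consecutive values are opposite
  have hodd : ∀ k : ℤ, u (2 * k + 1) = - u (2 * k) := by
    intro k
    have key : a (2 * k) * (u (2 * k + 1) + u (2 * k)) = 0 := by
      have h := hEv k
      linear_combination h + u (2 * k) * hsE + (lam : ℂ) * s * (hGall k)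
        + (lam : ℂ) * u (2 * k - 1) * hs2
    rcases mul_eq_zero.mp key with h | h
    · exact absurd h (ha (2 * k))
    · linear_combination h
  -- the even subsequence has constant modulus
  have hstep : ∀ k : ℤ, u (2 * (k + 1)) = -s * u (2 * k) := by
    intro k
    have h1 := hGall (k + 1)
    rw [show (2 * (k + 1) - 1 : ℤ) = 2 * k + 1 by ring, hodd k] at h1
    linear_combination h1
  have hUn : ∀ k : ℤ, ‖u (2 * k)‖ = ‖u (2 * 0)‖ :=
    normConst (fun k => u (2 * k))
      (fun k => by
        show ‖u (2 * (k + 1))‖ = ‖u (2 * k)‖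
        rw [hstep k, norm_mul, norm_neg, hs1, one_mul])
  have heven : ∀ k : ℤ, u (2 * k) = 0 := by
    have hc : ‖u (2 * (0 : ℤ))‖ ≤ 0 := by
      apply hzero
      intro k
      rw [← hUn k]
      have := norm_nonneg (u (2 * k - 1))
      linarith
    intro k
    exact norm_eq_zero.mp (le_antisymm (by rw [hUn k]; exact hc) (norm_nonneg _))
  funext n
  rcases Int.even_or_odd n with ⟨k, hk⟩ | ⟨k, hk⟩
  · have : n = 2 * k := by omega
    rw [this]
    exact heven k
  · rw [hk]
    show u (2 * k + 1) = 0
    rw [hodd k, heven k, neg_zero]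
end
end

section
/- Let α ∈ ℝ∖ℚ and ṽ ∈ C⁰(𝕋, ℂ). Assume there are constants l ≥ 1 and ε with 0 < ε ≤ l such that |Re ṽ(x)| ≤ l and ε ≤ Im ṽ(x) ≤ l for every x ∈ 𝕋. Then the Lyapunov exponent of the Schrödinger-type cocycle satisfies L(α, S^ṽ) ≥ C(l)·ε, where C(l) > 0 is a constant depending only on l. -/
open MeasureTheory Filter Real
open scoped Matrix

noncomputable section

attribute [local instance] Matrix.normedAddCommGroup

/-- The Schrödinger-type cocycle matrix `S^ṽ(x) = [[ṽ(x), −1],[1, 0]]`. -/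
def Scoc (v : ℝ → ℂ) (x : ℝ) : Matrix (Fin 2) (Fin 2) ℂ := !![v x, -1; 1, 0]

/-- The `n`-step product `A_n(x) = S^ṽ(x+(n−1)α) ⋯ S^ṽ(x)` of the quasiperiodic cocycle
`(α, S^ṽ)`. -/
def ScocProd (v : ℝ → ℂ) (α x : ℝ) : ℕ → Matrix (Fin 2) (Fin 2) ℂ
  | 0 => 1
  | n + 1 => Scoc v (x + (n : ℝ) * α) * ScocProd v α x n

/-- `L` is the Lyapunov exponent `L(α, S^ṽ) = lim (1/n)∫_𝕋 ln‖A_n(x)‖ dx`. -/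
def IsLyapunovSchrodinger (v : ℝ → ℂ) (α L : ℝ) : Prop :=
  Tendsto (fun n : ℕ =>
      (1 / (n : ℝ)) * ∫ x in Set.Ioc (0 : ℝ) 1, Real.log ‖ScocProd v α x n‖)
    atTop (nhds L)

namespace LyapAux


lemma norm_mul_le2 (A B : Matrix (Fin 2) (Fin 2) ℂ) : ‖A * B‖ ≤ 2 * (‖A‖ * ‖B‖) := by
  have h0 : (0:ℝ) ≤ 2 * (‖A‖ * ‖B‖) := by positivity
  rw [Matrix.norm_le_iff h0]
  intro i j
  rw [Matrix.mul_apply, Fin.sum_univ_two]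
  calc ‖A i 0 * B 0 j + A i 1 * B 1 j‖ ≤ ‖A i 0 * B 0 j‖ + ‖A i 1 * B 1 j‖ := norm_add_le _ _
    _ ≤ ‖A‖ * ‖B‖ + ‖A‖ * ‖B‖ := by
        rw [norm_mul, norm_mul]
        gcongr <;> exact Matrix.norm_entry_le_entrywise_sup_norm _
    _ = 2 * (‖A‖ * ‖B‖) := by ring

lemma det_scocProd (v : ℝ → ℂ) (α x : ℝ) (n : ℕ) : (ScocProd v α x n).det = 1 := by
  induction n with
  | zero => simp [ScocProd]
  | succ n ih =>
    rw [ScocProd, Matrix.det_mul, ih, mul_one, Scoc, Matrix.det_fin_two_of]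
    ring

lemma scocProd_ne_zero (v : ℝ → ℂ) (α x : ℝ) (n : ℕ) : ScocProd v α x n ≠ 0 := by
  intro h
  have := det_scocProd v α x n
  rw [h] at this
  simp at this

lemma norm_scocProd_pos (v : ℝ → ℂ) (α x : ℝ) (n : ℕ) : 0 < ‖ScocProd v α x n‖ :=
  norm_pos_iff.mpr (scocProd_ne_zero v α x n)

lemma continuous_scocProd (v : ℝ → ℂ) (hv : Continuous v) (α : ℝ) (n : ℕ) :
    Continuous fun x => ScocProd v α x n := by
  induction n with
  | zero => simpa [ScocProd] using continuous_const
  | succ n ih =>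
    have h1 : Continuous fun x => Scoc v (x + (n : ℝ) * α) := by
      apply continuous_matrix
      intro i j
      fin_cases i <;> fin_cases j <;>
        simp [Scoc] <;> fun_prop
    exact h1.matrix_mul ih

lemma scocProd_periodic (v : ℝ → ℂ) (hv : ∀ x, v (x + 1) = v x) (α : ℝ) (n : ℕ) :
    ∀ x, ScocProd v α (x + 1) n = ScocProd v α x n := by
  intro x
  induction n with
  | zero => rfl
  | succ n ih =>
    rw [ScocProd, ScocProd, ih]
    congr 1
    have : x + 1 + (n : ℝ) * α = (x + (n : ℝ) * α) + 1 := by ring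
    rw [Scoc, Scoc, this, hv]

lemma scocProd_add (v : ℝ → ℂ) (α x : ℝ) (m n : ℕ) :
    ScocProd v α x (m + n) = ScocProd v α (x + (m : ℝ) * α) n * ScocProd v α x m := by
  induction n with
  | zero => simp [ScocProd]
  | succ n ih =>
    have hx : x + ((m + n : ℕ) : ℝ) * α = (x + (m : ℝ) * α) + (n : ℝ) * α := by
      push_cast; ring
    rw [show m + (n+1) = (m + n) + 1 from rfl, ScocProd, ih, ScocProd, hx, mul_assoc]



def zs (v : ℝ → ℂ) (α x : ℝ) (z0 : ℂ) : ℕ → ℂ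
  | 0 => z0
  | k + 1 => v (x + (k : ℝ) * α) - (zs v α x z0 k)⁻¹

lemma mulVec_scoc (v : ℝ → ℂ) (y : ℝ) (w : ℂ) (hw : w ≠ 0) :
    Scoc v y *ᵥ ![w, 1] = w • ![v y - w⁻¹, 1] := by
  funext i
  fin_cases i <;>
    simp [Scoc, Matrix.mulVec, dotProduct, Fin.sum_univ_two, mul_sub,
      mul_inv_cancel₀ hw] <;>
    ring

lemma pointwise_lower (l ε α x : ℝ) (hl : 1 ≤ l) (hε : 0 < ε) (hεl : ε ≤ l)
    (v : ℝ → ℂ) (hv : ∀ y, ε ≤ (v y).im ∧ (v y).im ≤ l) (n : ℕ) :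
    ((n : ℝ) - 1) * (ε / (8 * l)) - ((1/2) * Real.log (l + 1/ε) + Real.log (l + 1))
      ≤ Real.log ‖ScocProd v α x n‖ := by
  have hlpos : (0:ℝ) < l := lt_of_lt_of_le one_pos hl
  set z : ℕ → ℂ := zs v α x ((l : ℂ) * Complex.I) with hzdef
  have hz0 : z 0 = (l : ℂ) * Complex.I := rfl
  have hz0im : (z 0).im = l := by simp [hz0]
  have hzrec : ∀ k, z (k + 1) = v (x + (k : ℝ) * α) - (z k)⁻¹ := fun k => rfl
  have him : ∀ k, ε ≤ (z k).im := by
    intro k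
    induction k with
    | zero => rw [hz0im]; exact hεl
    | succ k ih =>
      have hzk : z k ≠ 0 := by
        intro h; rw [h] at ih; simp at ih; linarith
      have hns : 0 < Complex.normSq (z k) := Complex.normSq_pos.mpr hzk
      have : (z (k + 1)).im = (v (x + (k : ℝ) * α)).im + (z k).im / Complex.normSq (z k) := by
        rw [hzrec k, Complex.sub_im, Complex.inv_im]; ring
      rw [this]
      have h1 : 0 ≤ (z k).im / Complex.normSq (z k) := div_nonneg (by linarith) hns.le
      linarith [(hv (x + (k : ℝ) * α)).1]
  have himpos : ∀ k, 0 < (z k).im := fun k => lt_of_lt_of_le hε (him k)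
  have hzne : ∀ k, z k ≠ 0 := by
    intro k h; have := himpos k; rw [h] at this; simp at this
  have hns : ∀ k, 0 < Complex.normSq (z k) := fun k => Complex.normSq_pos.mpr (hzne k)
  have him_rec : ∀ k, (z (k + 1)).im
      = (v (x + (k : ℝ) * α)).im + (z k).im / Complex.normSq (z k) := by
    intro k; rw [hzrec k, Complex.sub_im, Complex.inv_im]; ring
  have hdivle : ∀ k, (z k).im / Complex.normSq (z k) ≤ 1 / (z k).im := by
    intro k
    rw [div_le_div_iff₀ (hns k) (himpos k)]
    have : (z k).im ^ 2 ≤ Complex.normSq (z k) := by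
      rw [Complex.normSq_apply]; nlinarith [sq_nonneg (z k).re]
    nlinarith [himpos k]
  have hbu : ∀ k, (z k).im ≤ l + 1 / ε := by
    intro k
    cases k with
    | zero =>
      rw [hz0im]
      have h9 : 0 < 1/ε := by positivity
      linarith
    | succ k =>
      rw [him_rec k]
      have h1 := hdivle k
      have h2 : 1 / (z k).im ≤ 1 / ε := by
        apply one_div_le_one_div_of_le hε (him k)
      linarith [(hv (x + (k : ℝ) * α)).2]
  have hgap : ∀ k, (z (k + 1)).im - (v (x + (k : ℝ) * α)).im
      = (z k).im / Complex.normSq (z k) := by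
    intro k; rw [him_rec k]; ring
  have hgappos : ∀ k, 0 < (z (k + 1)).im - (v (x + (k : ℝ) * α)).im := by
    intro k; rw [hgap k]; exact div_pos (himpos k) (hns k)
  set t : ℕ → ℝ :=
    fun k => Real.log (z (k + 1)).im
      - Real.log ((z (k + 1)).im - (v (x + (k : ℝ) * α)).im) with htdef
  have hlognsq : ∀ k, Real.log (Complex.normSq (z k))
      = (Real.log (z k).im - Real.log (z (k + 1)).im) + t k := by
    intro k
    have h0 : Complex.normSq (z k) * ((z (k + 1)).im - (v (x + (k : ℝ) * α)).im)
        = (z k).im := by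
      rw [hgap k, mul_comm]
      exact div_mul_cancel₀ _ (hns k).ne'
    have h1 : Complex.normSq (z k)
        = (z k).im / ((z (k + 1)).im - (v (x + (k : ℝ) * α)).im) :=
      (eq_div_iff (hgappos k).ne').mpr h0
    rw [h1, Real.log_div (himpos k).ne' (hgappos k).ne', htdef]
    ring
  have ht0 : ∀ k, 0 ≤ t k := by
    intro k
    have : Real.log ((z (k + 1)).im - (v (x + (k : ℝ) * α)).im) ≤ Real.log (z (k + 1)).im := by
      apply Real.log_le_log (hgappos k)
      linarith [lt_of_lt_of_le hε (hv (x + (k : ℝ) * α)).1]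
    simp only [htdef]; linarith
  have htgood : ∀ k, (z (k + 1)).im ≤ 2 * l → ε / (2 * l) ≤ t k := by
    intro k hk
    have hbpos : 0 < (z (k + 1)).im := himpos (k + 1)
    have hsge : ε ≤ (v (x + (k : ℝ) * α)).im := (hv _).1
    have hgp : 0 < (z (k + 1)).im - (v (x + (k : ℝ) * α)).im := hgappos k
    have h1 : Real.log ((z (k + 1)).im - (v (x + (k : ℝ) * α)).im) - Real.log (z (k + 1)).im
        = Real.log (((z (k + 1)).im - (v (x + (k : ℝ) * α)).im) / (z (k + 1)).im) :=
      (Real.log_div hgp.ne' hbpos.ne').symm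
    have h2 := Real.log_le_sub_one_of_pos (div_pos hgp hbpos)
    have h3 : ((z (k + 1)).im - (v (x + (k : ℝ) * α)).im) / (z (k + 1)).im - 1
        = -((v (x + (k : ℝ) * α)).im / (z (k + 1)).im) := by
      field_simp; ring
    have h4 : ε / (2 * l) ≤ (v (x + (k : ℝ) * α)).im / (z (k + 1)).im := by
      rw [div_le_div_iff₀ (by positivity) hbpos]
      nlinarith
    simp only [htdef]
    rw [h3] at h2
    rw [← h1] at h2
    linarith
  have h2l : ∀ k, 2 * l < (z (k + 1)).im → (z (k + 2)).im ≤ 2 * l := by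
    intro k hk
    have := him_rec (k + 1)
    have h1 := hdivle (k + 1)
    have h2 : 1 / (z (k + 1)).im ≤ 1 / (2 * l) := by
      apply one_div_le_one_div_of_le (by positivity) hk.le
    have h3 : 1 / (2 * l) ≤ l := by
      rw [div_le_iff₀ (by positivity)]; nlinarith
    rw [this]
    have := (hv (x + ((k + 1 : ℕ) : ℝ) * α)).2
    linarith
  have hpair : ∀ m, ε / (2 * l) ≤ t (2 * m) + t (2 * m + 1) := by
    intro m
    rcases le_or_gt ((z (2 * m + 1)).im) (2 * l) with h | h
    · exact le_trans (htgood (2 * m) h) (le_add_of_nonneg_right (ht0 (2 * m + 1)))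
    · have h2 : (z (2 * m + 2)).im ≤ 2 * l := h2l (2 * m) h
      exact le_trans (htgood (2 * m + 1) (by exact_mod_cast h2))
        (le_add_of_nonneg_left (ht0 (2 * m)))
  have hS : ∀ m : ℕ, (m : ℝ) * (ε / (2 * l)) ≤ ∑ k ∈ Finset.range (2 * m), t k := by
    intro m
    induction m with
    | zero => simp
    | succ m ih =>
      have : 2 * (m + 1) = (2 * m + 1) + 1 := by ring
      rw [this, Finset.sum_range_succ, Finset.sum_range_succ]
      push_cast
      linarith [hpair m]
  have hSn : ((n / 2 : ℕ) : ℝ) * (ε / (2 * l)) ≤ ∑ k ∈ Finset.range n, t k := by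
    refine le_trans (hS (n / 2)) ?_
    apply Finset.sum_le_sum_of_subset_of_nonneg
    · apply Finset.range_subset_range.mpr
      omega
    · intro i _ _; exact ht0 i
  -- telescoping
  have htele : ∑ k ∈ Finset.range n, Real.log (Complex.normSq (z k))
      = (Real.log (z 0).im - Real.log (z n).im) + ∑ k ∈ Finset.range n, t k := by
    calc ∑ k ∈ Finset.range n, Real.log (Complex.normSq (z k))
        = ∑ k ∈ Finset.range n,
            ((Real.log (z k).im - Real.log (z (k + 1)).im) + t k) :=
          Finset.sum_congr rfl fun k _ => hlognsq k
      _ = (∑ k ∈ Finset.range n, (Real.log (z k).im - Real.log (z (k + 1)).im))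
            + ∑ k ∈ Finset.range n, t k := Finset.sum_add_distrib
      _ = (Real.log (z 0).im - Real.log (z n).im) + ∑ k ∈ Finset.range n, t k := by
          rw [Finset.sum_range_sub' (fun k => Real.log (z k).im)]
  have hlog0 : 0 ≤ Real.log (z 0).im := by rw [hz0im]; exact Real.log_nonneg hl
  have hlogn : Real.log (z n).im ≤ Real.log (l + 1 / ε) :=
    Real.log_le_log (himpos n) (hbu n)
  have hsumlog : -Real.log (l + 1 / ε) + ((n / 2 : ℕ) : ℝ) * (ε / (2 * l))
      ≤ ∑ k ∈ Finset.range n, Real.log (Complex.normSq (z k)) := by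
    rw [htele]; linarith
  -- matrix product and norm
  set P : ℂ := ∏ k ∈ Finset.range n, z k with hPdef
  have hPne : P ≠ 0 := Finset.prod_ne_zero_iff.mpr fun k _ => hzne k
  have hmul : ∀ m : ℕ, ScocProd v α x m *ᵥ ![(l : ℂ) * Complex.I, 1]
      = (∏ k ∈ Finset.range m, z k) • ![z m, 1] := by
    intro m
    induction m with
    | zero => simp [ScocProd, Matrix.one_mulVec, hz0]
    | succ m ih =>
      rw [ScocProd, ← Matrix.mulVec_mulVec, ih, Matrix.mulVec_smul,
        mulVec_scoc v _ (z m) (hzne m), Finset.prod_range_succ, smul_smul]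
      rfl
  have hP1 : P = (ScocProd v α x n *ᵥ ![(l : ℂ) * Complex.I, 1]) 1 := by
    rw [hmul n]; simp [hPdef]
  have habs : ‖P‖ ≤ ‖ScocProd v α x n‖ * (l + 1) := by
    rw [hP1]
    have : (ScocProd v α x n *ᵥ ![(l : ℂ) * Complex.I, 1]) 1
        = ScocProd v α x n 1 0 * ((l : ℂ) * Complex.I) + ScocProd v α x n 1 1 * 1 := by
      simp [Matrix.mulVec, dotProduct, Fin.sum_univ_two]
    rw [this]
    have e1 : ‖ScocProd v α x n 1 0‖ ≤ ‖ScocProd v α x n‖ :=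
      Matrix.norm_entry_le_entrywise_sup_norm _
    have e2 : ‖ScocProd v α x n 1 1‖ ≤ ‖ScocProd v α x n‖ :=
      Matrix.norm_entry_le_entrywise_sup_norm _
    have e3 : ‖((l : ℂ) * Complex.I)‖ = l := by
      simp [abs_of_pos hlpos]
    calc ‖(ScocProd v α x n 1 0 * ((l : ℂ) * Complex.I) + ScocProd v α x n 1 1 * 1)‖
        ≤ ‖(ScocProd v α x n 1 0)‖ * l + ‖(ScocProd v α x n 1 1)‖ := by
          refine le_trans (norm_add_le _ _) ?_
          rw [norm_mul, norm_mul]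
          simp [abs_of_pos hlpos]
      _ ≤ ‖ScocProd v α x n‖ * l + ‖ScocProd v α x n‖ := by
          exact add_le_add (mul_le_mul_of_nonneg_right e1 hlpos.le) e2
      _ = ‖ScocProd v α x n‖ * (l + 1) := by ring
  have habspos : 0 < ‖P‖ := norm_pos_iff.mpr hPne
  have hnormpos : 0 < ‖ScocProd v α x n‖ := by nlinarith
  have hlogabs : Real.log ‖P‖ ≤ Real.log ‖ScocProd v α x n‖ + Real.log (l + 1) := by
    rw [← Real.log_mul hnormpos.ne' (by positivity : (l + 1 : ℝ) ≠ 0)]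
    exact Real.log_le_log habspos habs
  have hlogabs2 : Real.log ‖P‖
      = (1 / 2) * ∑ k ∈ Finset.range n, Real.log (Complex.normSq (z k)) := by
    have h1 : Complex.normSq P = ∏ k ∈ Finset.range n, Complex.normSq (z k) := by
      rw [hPdef, map_prod]
    have h2 : Real.log (Complex.normSq P)
        = ∑ k ∈ Finset.range n, Real.log (Complex.normSq (z k)) := by
      rw [h1]
      exact Real.log_prod fun k _ => (hns k).ne'
    have h3 : Complex.normSq P = ‖P‖ ^ 2 := Complex.normSq_eq_norm_sq P
    rw [h3, Real.log_pow] at h2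
    push_cast at h2
    linarith
  -- final arithmetic
  have hcast : (n : ℝ) - 1 ≤ 2 * ((n / 2 : ℕ) : ℝ) := by
    have : n ≤ 2 * (n / 2) + 1 := by omega
    have := (Nat.cast_le (α := ℝ)).mpr this
    push_cast at this
    linarith
  have hfin : ((n : ℝ) - 1) * (ε / (8 * l)) ≤ (1 / 2) * (((n / 2 : ℕ) : ℝ) * (ε / (2 * l))) := by
    have hc : 0 ≤ ε / (8 * l) := by positivity
    have : (1 / 2) * (((n / 2 : ℕ) : ℝ) * (ε / (2 * l)))
        = (2 * ((n / 2 : ℕ) : ℝ)) * (ε / (8 * l)) := by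
      field_simp; ring
    rw [this]
    exact mul_le_mul_of_nonneg_right hcast hc
  have := mul_le_mul_of_nonneg_left hsumlog (by norm_num : (0:ℝ) ≤ 1/2)
  linarith [hlogabs, hlogabs2, hfin, this]

end LyapAux

/-- Let `α ∈ ℝ∖ℚ` and `ṽ ∈ C⁰(𝕋, ℂ)`. Assume there are constants
`l ≥ 1` and `0 < ε ≤ l` with `|Re ṽ(x)| ≤ l` and `ε ≤ Im ṽ(x) ≤ l` for every `x ∈ 𝕋`.
Then the Lyapunov exponent satisfies `L(α, S^ṽ) ≥ C(l)·ε`, where `C(l) > 0` is a constant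
depending only on `l`. -/
theorem lyapunov_lower_bound_of_complex_potential (l : ℝ) (hl : 1 ≤ l) :
    ∃ C : ℝ, 0 < C ∧
      ∀ ε : ℝ, 0 < ε → ε ≤ l →
        ∀ α : ℝ, Irrational α →
          ∀ v : ℝ → ℂ, Continuous v → (∀ x : ℝ, v (x + 1) = v x) →
            (∀ x : ℝ, |(v x).re| ≤ l ∧ ε ≤ (v x).im ∧ (v x).im ≤ l) →
            ∃ L : ℝ, IsLyapunovSchrodinger v α L ∧ C * ε ≤ L := by
  have hlpos : (0:ℝ) < l := lt_of_lt_of_le one_pos hl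
  refine ⟨1 / (8 * l), by positivity, ?_⟩
  intro ε hε hεl α _hα v hvcont hvper hvb
  have hv' : ∀ y, ε ≤ (v y).im ∧ (v y).im ≤ l := fun y => ⟨(hvb y).2.1, (hvb y).2.2⟩
  set D : ℝ := (1/2) * Real.log (l + 1/ε) + Real.log (l + 1) with hD
  have hDnn : 0 ≤ D := by
    have h1 : (0:ℝ) ≤ Real.log (l + 1/ε) := Real.log_nonneg (by
      have : 0 < 1/ε := by positivity
      linarith)
    have h2 : (0:ℝ) ≤ Real.log (l + 1) := Real.log_nonneg (by linarith)
    rw [hD]; linarith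
  set f : ℕ → ℝ → ℝ := fun n x => Real.log ‖ScocProd v α x n‖ with hf
  have hfc : ∀ n, Continuous (f n) := fun n =>
    ((LyapAux.continuous_scocProd v hvcont α n).norm).log
      fun x => (LyapAux.norm_scocProd_pos v α x n).ne'
  have hfintc : ∀ (n : ℕ) (c : ℝ),
      IntegrableOn (fun x => f n (x + c)) (Set.Ioc (0:ℝ) 1) volume := by
    intro n c
    have : Continuous fun x : ℝ => f n (x + c) :=
      (hfc n).comp (continuous_id.add continuous_const)
    exact this.integrableOn_Icc.mono_set Set.Ioc_subset_Icc_self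
  have hfint : ∀ n : ℕ, IntegrableOn (f n) (Set.Ioc (0:ℝ) 1) volume := fun n =>
    (hfc n).integrableOn_Icc.mono_set Set.Ioc_subset_Icc_self
  set u : ℕ → ℝ := fun n => ∫ x in Set.Ioc (0:ℝ) 1, f n x with hu
  have hper : ∀ n, Function.Periodic (f n) 1 := by
    intro n x
    simp only [hf]
    rw [LyapAux.scocProd_periodic v hvper α n x]
  have htrans : ∀ (n : ℕ) (c : ℝ), ∫ x in Set.Ioc (0:ℝ) 1, f n (x + c) = u n := by
    intro n c
    show (∫ x in Set.Ioc (0:ℝ) 1, f n (x + c)) = ∫ x in Set.Ioc (0:ℝ) 1, f n x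
    rw [← intervalIntegral.integral_of_le (zero_le_one (α := ℝ)),
      ← intervalIntegral.integral_of_le (zero_le_one (α := ℝ))]
    rw [intervalIntegral.integral_comp_add_right (f n) c]
    have h := (hper n).intervalIntegral_add_eq c 0
    rw [zero_add] at h
    rw [show (0:ℝ) + c = c by ring, show (1:ℝ) + c = c + 1 by ring, h]
  -- subadditivity
  have hsubadd : Subadditive (fun n => u n + Real.log 2) := by
    intro m n
    show u (m + n) + Real.log 2 ≤ (u m + Real.log 2) + (u n + Real.log 2)
    have key : ∀ x : ℝ, f (m + n) x ≤ f n (x + (m : ℝ) * α) + f m x + Real.log 2 := by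
      intro x
      have hc := LyapAux.scocProd_add v α x m n
      have h1 : ‖ScocProd v α x (m + n)‖
          ≤ 2 * (‖ScocProd v α (x + (m : ℝ) * α) n‖ * ‖ScocProd v α x m‖) := by
        rw [hc]; exact LyapAux.norm_mul_le2 _ _
      have p0 := LyapAux.norm_scocProd_pos v α x (m + n)
      have p1 := LyapAux.norm_scocProd_pos v α (x + (m : ℝ) * α) n
      have p2 := LyapAux.norm_scocProd_pos v α x m
      have h2 : Real.log ‖ScocProd v α x (m + n)‖
          ≤ Real.log (2 * (‖ScocProd v α (x + (m : ℝ) * α) n‖ * ‖ScocProd v α x m‖)) :=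
        Real.log_le_log p0 h1
      rw [Real.log_mul (by norm_num) (by positivity), Real.log_mul p1.ne' p2.ne'] at h2
      simp only [hf]
      linarith
    have irhs : IntegrableOn
        (fun x => f n (x + (m : ℝ) * α) + f m x + Real.log 2) (Set.Ioc (0:ℝ) 1) volume :=
      ((hfintc n ((m : ℝ) * α)).add (hfint m)).add
        (integrableOn_const measure_Ioc_lt_top.ne)
    have hmono : u (m + n) ≤ ∫ x in Set.Ioc (0:ℝ) 1,
        (f n (x + (m : ℝ) * α) + f m x + Real.log 2) :=
      setIntegral_mono_on (hfint (m + n)) irhs measurableSet_Ioc fun x _ => key x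
    have hsplit : ∫ x in Set.Ioc (0:ℝ) 1, (f n (x + (m : ℝ) * α) + f m x + Real.log 2)
        = u n + u m + Real.log 2 := by
      have iA : IntegrableOn (fun x => f n (x + (m : ℝ) * α) + f m x)
          (Set.Ioc (0:ℝ) 1) volume := (hfintc n ((m : ℝ) * α)).add (hfint m)
      have iB : IntegrableOn (fun _ : ℝ => Real.log 2) (Set.Ioc (0:ℝ) 1) volume :=
        integrableOn_const measure_Ioc_lt_top.ne
      rw [integral_add iA iB, integral_add (hfintc n ((m : ℝ) * α)) (hfint m),
        htrans n ((m : ℝ) * α)]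
      have hm : (∫ x in Set.Ioc (0:ℝ) 1, f m x) = u m := rfl
      rw [hm]
      simp [Real.volume_Ioc]
    rw [hsplit] at hmono
    linarith
  -- lower bound for u n
  have hulow : ∀ n : ℕ, ((n : ℝ) - 1) * (ε / (8 * l)) - D ≤ u n := by
    intro n
    have h := setIntegral_ge_of_const_le (μ := volume) measurableSet_Ioc
      measure_Ioc_lt_top.ne
      (fun x _ => LyapAux.pointwise_lower l ε α x hl hε hεl v hv' n) (hfint n)
    rw [Real.volume_real_Ioc_of_le zero_le_one, sub_zero, one_smul] at h
    exact h
  have hlog2 : (0:ℝ) ≤ Real.log 2 := Real.log_nonneg one_le_two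
  clear_value D
  -- bddBelow
  have hbdd : BddBelow (Set.range fun n : ℕ => (u n + Real.log 2) / n) := by
    refine ⟨-D, ?_⟩
    rintro _ ⟨n, rfl⟩
    cases n with
    | zero => simp; linarith
    | succ n =>
      have hn : (0:ℝ) < ((n + 1 : ℕ) : ℝ) := by exact_mod_cast Nat.succ_pos n
      show -D ≤ (u (n + 1) + Real.log 2) / ((n + 1 : ℕ) : ℝ)
      rw [le_div_iff₀ hn]
      have h1 := hulow (n + 1)
      have h2 : (((n + 1 : ℕ) : ℝ) - 1) = (n : ℝ) := by push_cast; ring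
      rw [h2] at h1
      have h3 : 0 ≤ (n : ℝ) * (ε / (8 * l)) := by positivity
      have h4 : 0 ≤ D * (n : ℝ) := by positivity
      have h5 : ((n + 1 : ℕ) : ℝ) = (n : ℝ) + 1 := by push_cast; ring
      rw [h5]
      have h6 : -D * ((n : ℝ) + 1) = -(D * (n : ℝ)) - D := by ring
      linarith
  have htend := hsubadd.tendsto_lim hbdd
  set L : ℝ := hsubadd.lim with hL
  have h2' : Tendsto (fun n : ℕ => (1 / (n : ℝ)) * u n) atTop (nhds L) := by
    have hsub : Tendsto (fun n : ℕ => (u n + Real.log 2) / n - Real.log 2 * (1 / (n : ℝ)))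
        atTop (nhds (L - Real.log 2 * 0)) :=
      htend.sub (tendsto_const_nhds.mul tendsto_one_div_atTop_nhds_zero_nat)
    rw [mul_zero, sub_zero] at hsub
    have heq : (fun n : ℕ => (u n + Real.log 2) / n - Real.log 2 * (1 / (n : ℝ)))
        = fun n : ℕ => (1 / (n : ℝ)) * u n := by
      funext n; ring
    rwa [heq] at hsub
  refine ⟨L, h2', ?_⟩
  -- lower bound for L
  set g : ℕ → ℝ := fun n => (1 - 1 / (n : ℝ)) * (ε / (8 * l)) - D * (1 / (n : ℝ)) with hg
  have htg : Tendsto g atTop (nhds (ε / (8 * l))) := by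
    have : Tendsto g atTop (nhds ((1 - 0) * (ε / (8 * l)) - D * 0)) :=
      ((tendsto_const_nhds.sub tendsto_one_div_atTop_nhds_zero_nat).mul
        tendsto_const_nhds).sub (tendsto_const_nhds.mul tendsto_one_div_atTop_nhds_zero_nat)
    simpa using this
  have hev : ∀ᶠ n : ℕ in atTop, g n ≤ (1 / (n : ℝ)) * u n := by
    filter_upwards [eventually_ge_atTop 1] with n hn
    have hn0 : ((n : ℝ)) ≠ 0 := by
      have : (1:ℝ) ≤ (n : ℝ) := by exact_mod_cast hn
      linarith
    have h3 : g n = (1 / (n : ℝ)) * (((n : ℝ) - 1) * (ε / (8 * l)) - D) := by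
      have hh : (1 - 1 / (n : ℝ)) = (1 / (n : ℝ)) * ((n : ℝ) - 1) := by
        field_simp
      show (1 - 1 / (n : ℝ)) * (ε / (8 * l)) - D * (1 / (n : ℝ)) = _
      rw [hh]
      ring
    rw [h3]
    exact mul_le_mul_of_nonneg_left (hulow n) (by positivity)
  have hfin := le_of_tendsto_of_tendsto htg h2' hev
  calc (1 / (8 * l)) * ε = ε / (8 * l) := by ring
    _ ≤ L := hfin
end
end
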